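/- Let M ≥ 1, let g₁, …, g_M > 0, let I₁, …, I_M ≥ 0, let N > 0, and let p₁, …, p_M ≥ 0. Write S_i = Σ_{j<i} p_j for the partial sums (so S₁ = 0) and T = Σ_{j=1}^M p_j. Then the following telescoping identity holds: Σ_{i=1}^M log(1 + g_i·p_i / (g_i·S_i + I_i + N)) = Σ_{i=1}^{M−1} log( (g_i·S_{i+1} + I_i + N) / (g_{i+1}·S_{i+1} + I_{i+1} + N) ) + log(g_M·T + I_M + N) − log(I₁ + N). -/

import Mathlib

/-- Telescoping identity for the single-cell NOMA sum rate (users indexed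
`0, …, M-1`): with partial sums `S i = ∑_{j<i} p j` and total `T = ∑_{j<M} p j`,
the sum rate equals a telescoped sum plus boundary terms. -/
theorem noma_sumrate_telescoping
    (M : ℕ) (hM : 1 ≤ M)
    (g I p : ℕ → ℝ)
    (hg : ∀ i < M, 0 < g i)
    (hI : ∀ i < M, 0 ≤ I i)
    (N : ℝ) (hN : 0 < N)
    (hp : ∀ i < M, 0 ≤ p i) :
    (∑ i ∈ Finset.range M,
        Real.log (1 + g i * p i /
          (g i * (∑ j ∈ Finset.range i, p j) + I i + N)))
      = (∑ i ∈ Finset.range (M - 1),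
          Real.log ((g i * (∑ j ∈ Finset.range (i + 1), p j) + I i + N)
            / (g (i + 1) * (∑ j ∈ Finset.range (i + 1), p j) + I (i + 1) + N)))
        + Real.log (g (M - 1) * (∑ j ∈ Finset.range M, p j) + I (M - 1) + N)
        - Real.log (I 0 + N) := by
  set F : ℕ → ℝ := fun i => g i * (∑ j ∈ Finset.range (i + 1), p j) + I i + N with hF
  set H : ℕ → ℝ := fun i => g i * (∑ j ∈ Finset.range i, p j) + I i + N with hH
  have hSnn : ∀ i, i ≤ M → 0 ≤ ∑ j ∈ Finset.range i, p j := by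
    intro i hi
    apply Finset.sum_nonneg
    intro j hj
    exact hp j (lt_of_lt_of_le (Finset.mem_range.mp hj) hi)
  have hHpos : ∀ i, i < M → 0 < H i := by
    intro i hi
    have := mul_nonneg (hg i hi).le (hSnn i hi.le)
    have := hI i hi
    simp only [hH]
    linarith
  have hFpos : ∀ i, i < M → 0 < F i := by
    intro i hi
    have := mul_nonneg (hg i hi).le (hSnn (i + 1) hi)
    have := hI i hi
    simp only [hF]
    linarith
  have step1 : ∀ i ∈ Finset.range M,
      Real.log (1 + g i * p i / (g i * (∑ j ∈ Finset.range i, p j) + I i + N))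
        = Real.log (F i) - Real.log (H i) := by
    intro i hi
    rw [Finset.mem_range] at hi
    have hH0 := hHpos i hi
    have h1 : 1 + g i * p i / (g i * (∑ j ∈ Finset.range i, p j) + I i + N)
        = F i / H i := by
      rw [hF, hH]
      have hX : g i * (∑ j ∈ Finset.range i, p j) + I i + N ≠ 0 := hH0.ne'
      field_simp
      rw [Finset.sum_range_succ]
      ring
    rw [h1, Real.log_div (hFpos i hi).ne' hH0.ne']
  have step2 : ∀ i ∈ Finset.range (M - 1),
      Real.log ((g i * (∑ j ∈ Finset.range (i + 1), p j) + I i + N)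
            / (g (i + 1) * (∑ j ∈ Finset.range (i + 1), p j) + I (i + 1) + N))
        = Real.log (F i) - Real.log (H (i + 1)) := by
    intro i hi
    rw [Finset.mem_range] at hi
    have hiM : i < M := lt_of_lt_of_le hi (Nat.sub_le M 1)
    have hi1M : i + 1 < M := by omega
    exact Real.log_div (hFpos i hiM).ne' (hHpos (i + 1) hi1M).ne'
  rw [Finset.sum_congr rfl step1, Finset.sum_congr rfl step2]
  have hM' : M = (M - 1) + 1 := by omega
  have key1 : (∑ i ∈ Finset.range M, (Real.log (F i) - Real.log (H i)))
      = ∑ i ∈ Finset.range M, Real.log (F i) - ∑ i ∈ Finset.range M, Real.log (H i) :=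
    Finset.sum_sub_distrib _ _
  have key2 : (∑ i ∈ Finset.range (M - 1), (Real.log (F i) - Real.log (H (i + 1))))
      = ∑ i ∈ Finset.range (M - 1), Real.log (F i)
        - ∑ i ∈ Finset.range (M - 1), Real.log (H (i + 1)) :=
    Finset.sum_sub_distrib _ _
  have hFsum : ∑ i ∈ Finset.range M, Real.log (F i)
      = ∑ i ∈ Finset.range (M - 1), Real.log (F i) + Real.log (F (M - 1)) := by
    conv_lhs => rw [hM']
    exact Finset.sum_range_succ _ _
  have hHsum : ∑ i ∈ Finset.range M, Real.log (H i)
      = ∑ i ∈ Finset.range (M - 1), Real.log (H (i + 1)) + Real.log (H 0) := by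
    conv_lhs => rw [hM']
    exact Finset.sum_range_succ' _ _
  have hFM : F (M - 1) = g (M - 1) * (∑ j ∈ Finset.range M, p j) + I (M - 1) + N := by
    rw [hF]; simp only []; rw [← hM']
  have hH0 : H 0 = I 0 + N := by simp [hH]
  rw [key1, key2, hFsum, hHsum, hFM, hH0]
  ring
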